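/- Let s ≥ 1, t ≥ 2 and z ≥ 1 be natural numbers and θ = t·s + z. Define P_CA = {j + s·i : 0 ≤ j ≤ s−1, 0 ≤ i ≤ t−1}, P_CB = {(s−1−k) + θ·l : 0 ≤ k ≤ s−1, 0 ≤ l ≤ t−1}, P_SA = {t·s + u : 0 ≤ u ≤ z−1}, and P_SB = {t·s + θ·(t−1) + r : 0 ≤ r ≤ z−1}. Then the sumset (P_CA ∪ P_SA) + (P_CB ∪ P_SB) has cardinality 2·t·s + θ·(t−1) + 2z − 1, which equals (t+1)·(t·s+z) − 1. -/
import Mathlib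


open Pointwise

/-- The first union is the interval `[0, t*s+z)`. -/
lemma age_A_eq (s t z : ℕ) (hs : 1 ≤ s) (ht : 2 ≤ t) :
    ({n : ℕ | ∃ j i, j < s ∧ i < t ∧ n = j + s * i} ∪
      {n : ℕ | ∃ u, u < z ∧ n = t * s + u}) = Set.Iio (t * s + z) := by
  ext n
  simp only [Set.mem_union, Set.mem_setOf_eq, Set.mem_Iio]
  constructor
  · rintro (⟨j, i, hj, hi, rfl⟩ | ⟨u, hu, rfl⟩)
    · have h1 : s * i ≤ s * (t - 1) := Nat.mul_le_mul_left _ (by omega)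
      have h2 : s * (t - 1) + s = s * t := by
        rw [← Nat.mul_succ]; congr 1; omega
      have h3 : s * t = t * s := Nat.mul_comm s t
      omega
    · omega
  · intro hn
    rcases lt_or_ge n (t * s) with h | h
    · left
      refine ⟨n % s, n / s, Nat.mod_lt _ (by omega), ?_, (Nat.mod_add_div n s).symm⟩
      exact (Nat.div_lt_iff_lt_mul (by omega)).mpr h
    · right
      exact ⟨n - t * s, by omega, by omega⟩

/-- AGE-CMPC worker count for λ = z (θ = t·s + z):
|(P_CA ∪ P_SA) + (P_CB ∪ P_SB)| = 2ts + θ(t−1) + 2z − 1 = (t+1)(ts+z) − 1. -/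
theorem age_workers_lambda_eq_z (s t z : ℕ) (hs : 1 ≤ s) (ht : 2 ≤ t)
    (hz : 1 ≤ z) :
    (({n : ℕ | ∃ j i, j < s ∧ i < t ∧ n = j + s * i} ∪
      {n : ℕ | ∃ u, u < z ∧ n = t * s + u}) +
     ({n : ℕ | ∃ k l, k < s ∧ l < t ∧ n = (s - 1 - k) + (t * s + z) * l} ∪
      {n : ℕ | ∃ r, r < z ∧ n = t * s + (t * s + z) * (t - 1) + r})).ncard
      = 2 * (t * s) + (t * s + z) * (t - 1) + 2 * z - 1 ∧
    2 * (t * s) + (t * s + z) * (t - 1) + 2 * z - 1 = (t + 1) * (t * s + z) - 1 := by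
  set θ := t * s + z with hθ
  set P := θ * (t - 1) with hP
  -- arithmetic facts relating the nonlinear atoms
  have hts : s ≤ t * s := Nat.le_mul_of_pos_left s (by omega)
  have hθpos : 0 < θ := by omega
  have hE : (t + 1) * θ = P + 2 * θ := by
    rw [hP, show t + 1 = (t - 1) + 2 by omega, add_mul, mul_comm θ (t - 1)]
  have hPt : θ * t = P + θ := by
    conv_lhs => rw [show t = (t - 1) + 1 by omega]
    rw [Nat.mul_add, Nat.mul_one, hP]
  have hsθ : s ≤ θ := by omega
  -- the set equality
  have hA := age_A_eq s t z hs ht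
  rw [hA]
  have hset :
      (Set.Iio θ +
        ({n : ℕ | ∃ k l, k < s ∧ l < t ∧ n = (s - 1 - k) + θ * l} ∪
         {n : ℕ | ∃ r, r < z ∧ n = t * s + P + r})) =
      Set.Iio ((t + 1) * θ - 1) := by
    ext n
    simp only [Set.mem_add, Set.mem_union, Set.mem_setOf_eq, Set.mem_Iio]
    constructor
    · rintro ⟨x, hx, y, (⟨k, l, hk, hl, rfl⟩ | ⟨r, hr, rfl⟩), rfl⟩
      · have h1 : θ * l ≤ θ * (t - 1) := Nat.mul_le_mul_left _ (by omega)
        omega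
      · omega
    · intro hn
      rcases lt_or_ge n (θ * t) with h | h
      · -- x = n % θ, y = θ * (n / θ)
        refine ⟨n % θ, Nat.mod_lt _ hθpos, θ * (n / θ),
          Or.inl ⟨s - 1, n / θ, by omega, (Nat.div_lt_iff_lt_mul hθpos).mpr (by rw [Nat.mul_comm t θ]; omega), by omega⟩,
          ?_⟩
        have := Nat.mod_add_div n θ
        omega
      · rcases le_or_gt n (θ * t + s - 2) with h2 | h2
        · -- x = n - ((s-1) + P), y = (s-1) + θ*(t-1)
          refine ⟨n - ((s - 1) + P), by omega, (s - 1) + P,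
            Or.inl ⟨0, t - 1, by omega, by omega, by rw [hP]; omega⟩, by omega⟩
        · -- use the secret part of B
          rcases lt_or_ge (n - (t * s + P)) θ with h3 | h3
          · exact ⟨n - (t * s + P), by omega, t * s + P,
              Or.inr ⟨0, by omega, by omega⟩, by omega⟩
          · exact ⟨θ - 1, by omega, t * s + P + (n - (t * s + P) - (θ - 1)),
              Or.inr ⟨n - (t * s + P) - (θ - 1), by omega, by omega⟩, by omega⟩
  rw [hset]
  rw [← Finset.coe_range, Set.ncard_coe_finset, Finset.card_range]
  omega
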